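/- Let G = (V,E) be a directed graph with designated vertices s ≠ t, let f be a 0-1 flow from s to t in G, and let R_f be the residual graph of f. If there is a (simple) directed path from s to t in R_f, then there exists a 0-1 flow f' from s to t in G with value |f'| = |f| + 1. -/

import Mathlib

open Finset

variable {V : Type} [Fintype V] [DecidableEq V]

/-- net outflow of `h` at `v`, as an integer -/
private def gflow (h : V → V → ℕ) (v : V) : ℤ :=
  (∑ w, (h v w : ℤ)) - ∑ u, (h u v : ℤ)

private lemma gflow_update (h : V → V → ℕ) (p q : V) (c : ℕ) (v : V) :
    gflow (fun u w => if u = p ∧ w = q then c else h u w) v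
      = gflow h v + (if v = p then (c : ℤ) - h p q else 0)
        - (if v = q then (c : ℤ) - h p q else 0) := by
  have hrow : (∑ w, ((if v = p ∧ w = q then c else h v w : ℕ) : ℤ))
      = (∑ w, (h v w : ℤ)) + (if v = p then (c : ℤ) - h p q else 0) := by
    have hpt : ∀ w, ((if v = p ∧ w = q then c else h v w : ℕ) : ℤ)
        = (h v w : ℤ) + (if v = p then (if w = q then (c : ℤ) - h p q else 0) else 0) := by
      intro w
      by_cases h1 : v = p <;> by_cases h2 : w = q <;> simp [h1, h2] <;> ring
    rw [Finset.sum_congr rfl fun w _ => hpt w, Finset.sum_add_distrib]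
    by_cases h1 : v = p
    · simp [h1, Finset.sum_ite_eq' Finset.univ q fun _ => (c : ℤ) - h p q]
    · simp [h1]
  have hcol : (∑ u, ((if u = p ∧ v = q then c else h u v : ℕ) : ℤ))
      = (∑ u, (h u v : ℤ)) + (if v = q then (c : ℤ) - h p q else 0) := by
    have hpt : ∀ u, ((if u = p ∧ v = q then c else h u v : ℕ) : ℤ)
        = (h u v : ℤ) + (if v = q then (if u = p then (c : ℤ) - h p q else 0) else 0) := by
      intro u
      by_cases h1 : v = q <;> by_cases h2 : u = p <;> simp [h1, h2] <;> ring
    rw [Finset.sum_congr rfl fun u _ => hpt u, Finset.sum_add_distrib]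
    by_cases h1 : v = q
    · simp [h1, Finset.sum_ite_eq' Finset.univ p fun _ => (c : ℤ) - h p q]
    · simp [h1]
  simp only [gflow, hrow, hcol]
  ring

private lemma chain_nodup {r : V → V → Prop} :
    ∀ (n : ℕ) (l : List V) (a : V), l.length ≤ n → List.Chain r a l →
      ∃ l', List.Chain r a l' ∧ (a :: l').Nodup ∧ l' ⊆ l ∧
        (a :: l').getLast? = (a :: l).getLast? := by
  intro n
  induction n with
  | zero =>
    intro l a hl _
    have : l = [] := List.length_eq_zero_iff.mp (Nat.le_zero.mp hl)
    subst this
    exact ⟨[], List.Chain.nil, List.nodup_singleton a, List.nil_subset _, rfl⟩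
  | succ n ih =>
    intro l a hl hc
    by_cases ha : a ∈ l
    · obtain ⟨l₁, l₂, rfl⟩ := List.append_of_mem ha
      have hc2 : List.Chain r a l₂ := (List.isChain_cons_split.mp hc).2
      have hlen : l₂.length ≤ n := by
        simp only [List.length_append, List.length_cons] at hl; omega
      obtain ⟨l', h1, h2, h3, h4⟩ := ih l₂ a hlen hc2
      refine ⟨l', h1, h2, fun x hx => ?_, ?_⟩
      · simp only [List.mem_append, List.mem_cons]
        exact Or.inr (Or.inr (h3 hx))
      · rw [h4]
        have : (a :: (l₁ ++ a :: l₂)).getLast? = (a :: l₂).getLast? := by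
          rw [show (a :: (l₁ ++ a :: l₂)) = (a :: l₁) ++ (a :: l₂) by simp,
            List.getLast?_append,
            List.getLast?_eq_getLast_of_ne_nil (List.cons_ne_nil a l₂), Option.or]
        rw [this]
    · match l, hc with
      | [], _ => exact ⟨[], List.Chain.nil, List.nodup_singleton a, List.nil_subset _, rfl⟩
      | c :: l'', hc =>
        have hrac : r a c := (List.chain_cons.mp hc).1
        have hcc : List.Chain r c l'' := (List.chain_cons.mp hc).2
        have hlen : l''.length ≤ n := by
          simp only [List.length_cons] at hl; omega
        obtain ⟨l', h1, h2, h3, h4⟩ := ih l'' c hlen hcc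
        have hane : a ∉ c :: l' := by
          simp only [List.mem_cons] at ha ⊢
          push_neg at ha ⊢
          exact ⟨ha.1, fun hx => ha.2 (h3 hx)⟩
        refine ⟨c :: l', List.chain_cons.mpr ⟨hrac, h1⟩,
          List.nodup_cons.mpr ⟨hane, h2⟩, ?_, ?_⟩
        · intro x hx
          simp only [List.mem_cons] at hx ⊢
          exact hx.imp id fun h => h3 h
        · rw [List.getLast?_cons_cons, h4, List.getLast?_cons_cons]

private lemma aug (E : Finset (V × V)) (t : V) (f : V → V → ℕ)
    (hsupp : ∀ u v, (u, v) ∉ E → f u v = 0)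
    (hcap : ∀ u v, f u v ≤ 1)
    (hanti : ∀ u v : V, (u, v) ∈ E → (v, u) ∉ E) :
    ∀ (l : List V) (x : V),
      List.Chain (fun a b => ((a, b) ∈ E ∧ f a b = 0) ∨ ((b, a) ∈ E ∧ f b a = 1)) x l →
      (x :: l).Nodup → (x :: l).getLast? = some t →
      ∃ f' : V → V → ℕ,
        (∀ u v, (u, v) ∉ E → f' u v = 0) ∧
        (∀ u v, f' u v ≤ 1) ∧
        (∀ u v, u ∉ x :: l → f' u v = f u v) ∧
        (∀ u v, v ∉ x :: l → f' u v = f u v) ∧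
        (∀ v, v ≠ x → v ≠ t → gflow f' v = gflow f v) ∧
        (x ≠ t → gflow f' x = gflow f x + 1) := by
  intro l
  induction l with
  | nil =>
    intro x _ _ hlast
    have hxt : x = t := by simpa using hlast
    exact ⟨f, hsupp, hcap, fun _ _ _ => rfl, fun _ _ _ => rfl,
      fun _ _ _ => rfl, fun h => absurd hxt h⟩
  | cons b l'' ih =>
    intro x hc hnd hlast
    have hrxb : ((x, b) ∈ E ∧ f x b = 0) ∨ ((b, x) ∈ E ∧ f b x = 1) :=
      (List.chain_cons.mp hc).1
    have hcb : List.Chain _ b l'' := (List.chain_cons.mp hc).2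
    have hxnotin : x ∉ b :: l'' := (List.nodup_cons.mp hnd).1
    have hndb : (b :: l'').Nodup := (List.nodup_cons.mp hnd).2
    have hlastb : (b :: l'').getLast? = some t := by
      rwa [List.getLast?_cons_cons] at hlast
    have htmem : t ∈ b :: l'' := List.mem_of_mem_getLast? (by simp [hlastb])
    have hxt : x ≠ t := fun h => hxnotin (h ▸ htmem)
    have hxb : x ≠ b := fun h => hxnotin (h ▸ (List.mem_cons_self (a := b) (l := l'')))
    obtain ⟨f'', hs'', hc'', hu'', hv'', hg'', hgx''⟩ := ih b hcb hndb hlastb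
    have hgfx : gflow f'' x = gflow f x := hg'' x hxb hxt
    rcases hrxb with ⟨hmem, hf0⟩ | ⟨hmem, hf1⟩
    · -- forward edge (x,b) ∈ E, f x b = 0 : set it to 1
      have hf''xb : f'' x b = 0 := by rw [hu'' x b hxnotin]; exact hf0
      refine ⟨fun u w => if u = x ∧ w = b then 1 else f'' u w, ?_, ?_, ?_, ?_, ?_, ?_⟩
      · intro u v huv
        by_cases h : u = x ∧ v = b
        · exact absurd (h.1 ▸ h.2 ▸ huv) (by simp [hmem])
        · simp only [if_neg h]; exact hs'' u v huv
      · intro u v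
        by_cases h : u = x ∧ v = b
        · simp [h]
        · simp only [if_neg h]; exact hc'' u v
      · intro u v hu
        have hux : u ≠ x := fun h => hu (by simp [h])
        have hu' : u ∉ b :: l'' := fun h => hu (by simp [h])
        simp only [if_neg (fun h : u = x ∧ v = b => hux h.1)]
        exact hu'' u v hu'
      · intro u v hv
        have hvb : v ≠ b := fun h => hv (by simp [h])
        have hv' : v ∉ b :: l'' := fun h => hv (by simp [h])
        simp only [if_neg (fun h : u = x ∧ v = b => hvb h.2)]
        exact hv'' u v hv'
      · intro v hvx hvt
        rw [gflow_update f'' x b 1 v, hf''xb]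
        by_cases hvb : v = b
        · subst hvb
          have hbt : v ≠ t := hvt
          rw [hgx'' hbt, if_neg hvx, if_pos rfl]
          push_cast; ring
        · rw [hg'' v hvb hvt, if_neg hvx, if_neg hvb]; ring
      · intro _
        rw [gflow_update f'' x b 1 x, hf''xb, hgfx, if_pos rfl, if_neg hxb]
        push_cast; ring
    · -- backward edge (b,x) ∈ E, f b x = 1 : set it to 0
      have hf''bx : f'' b x = 1 := by rw [hv'' b x hxnotin]; exact hf1
      refine ⟨fun u w => if u = b ∧ w = x then 0 else f'' u w, ?_, ?_, ?_, ?_, ?_, ?_⟩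
      · intro u v huv
        by_cases h : u = b ∧ v = x
        · simp [h]
        · simp only [if_neg h]; exact hs'' u v huv
      · intro u v
        by_cases h : u = b ∧ v = x
        · simp [h]
        · simp only [if_neg h]; exact hc'' u v
      · intro u v hu
        have hub : u ≠ b := fun h => hu (by simp [h])
        have hu' : u ∉ b :: l'' := fun h => hu (by simp [h])
        simp only [if_neg (fun h : u = b ∧ v = x => hub h.1)]
        exact hu'' u v hu'
      · intro u v hv
        have hvx : v ≠ x := fun h => hv (by simp [h])
        have hv' : v ∉ b :: l'' := fun h => hv (by simp [h])
        simp only [if_neg (fun h : u = b ∧ v = x => hvx h.2)]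
        exact hv'' u v hv'
      · intro v hvx hvt
        rw [gflow_update f'' b x 0 v, hf''bx]
        by_cases hvb : v = b
        · subst hvb
          rw [hgx'' hvt, if_pos rfl, if_neg hvx]
          push_cast; ring
        · rw [hg'' v hvb hvt, if_neg hvb, if_neg hvx]; ring
      · intro _
        rw [gflow_update f'' b x 0 x, hf''bx, hgfx, if_neg hxb, if_pos rfl]
        push_cast; ring

/-- If `f` is a 0-1 flow from `s` to `t` in a digraph `G = (V,E)`
(no pair of antiparallel edges) and the residual graph `R_f` contains a directed
path from `s` to `t`, then there is a 0-1 flow `f'` of value `|f| + 1`. -/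
theorem augmenting_path_increases_flow {V : Type} [Fintype V] [DecidableEq V]
    (E : Finset (V × V)) (s t : V) (hst : s ≠ t)
    (hanti : ∀ u v : V, (u, v) ∈ E → (v, u) ∉ E)
    (f : V → V → ℕ)
    (hsupp : ∀ u v, (u, v) ∉ E → f u v = 0)
    (hcap : ∀ u v, f u v ≤ 1)
    (hcons : ∀ v, v ≠ s → v ≠ t → ∑ u, f u v = ∑ w, f v w)
    (hpath : Relation.ReflTransGen
      (fun a b => ((a, b) ∈ E ∧ f a b = 0) ∨ ((b, a) ∈ E ∧ f b a = 1)) s t) :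
    ∃ f' : V → V → ℕ,
      (∀ u v, (u, v) ∉ E → f' u v = 0) ∧
      (∀ u v, f' u v ≤ 1) ∧
      (∀ v, v ≠ s → v ≠ t → ∑ u, f' u v = ∑ w, f' v w) ∧
      ((∑ v, f' s v : ℤ) - ∑ u, f' u s = ((∑ v, f s v : ℤ) - ∑ u, f u s) + 1) := by
  obtain ⟨l, hchain, hlast⟩ := List.exists_isChain_cons_of_relationReflTransGen hpath
  have hlast? : (s :: l).getLast? = some t := by
    rw [List.getLast?_eq_getLast_of_ne_nil (List.cons_ne_nil _ _), hlast]
  obtain ⟨l', h1, h2, _, h4⟩ := chain_nodup l.length l s (le_refl _) hchain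
  obtain ⟨f', hs', hc', _, _, hg', hgs'⟩ :=
    aug E t f hsupp hcap hanti l' s h1 h2 (h4.trans hlast?)
  refine ⟨f', hs', hc', ?_, ?_⟩
  · intro v hvs hvt
    have h0 : gflow f v = 0 := by
      rw [gflow, sub_eq_zero]
      exact_mod_cast (hcons v hvs hvt).symm
    have h1 : gflow f' v = 0 := (hg' v hvs hvt).trans h0
    simp only [gflow, sub_eq_zero] at h1
    exact_mod_cast h1.symm
  · have := hgs' hst
    simp only [gflow] at this
    push_cast at this ⊢
    linarith
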